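/- arXiv:1706.08559 — 2 statements merged into one kernel-verified Lean document; each statement's English description precedes it below -/
import Mathlib

section
/- Let I = ⟨f_1,...,f_ℓ⟩ be a pseudomonomial ideal in R = F_2[x_1,...,x_n] where f_1,...,f_ℓ is the set of all minimal pseudomonomials in I (canonical form). Let J = ⟨P(f_1),...,P(f_ℓ)⟩ in S = F_2[x_1,...,x_n,y_1,...,y_n]. Then for every pseudomonomial f in R, f ∈ I if and only if P(f) ∈ J. -/
open MvPolynomial

/-- The pseudomonomial with data `(σ, τ)`: `∏_{i∈σ} x_i · ∏_{j∈τ} (1 - x_j)`. -/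
noncomputable def psm {n : ℕ} (σ τ : Finset (Fin n)) :
    MvPolynomial (Fin n) (ZMod 2) :=
  (∏ i ∈ σ, X i) * ∏ j ∈ τ, (1 - X j)

/-- The polarization of the pseudomonomial with data `(σ, τ)` in
`S = F₂[x_1,…,x_n,y_1,…,y_n]`, where `x_i = X (Sum.inl i)`, `y_j = X (Sum.inr j)`. -/
noncomputable def polz {n : ℕ} (σ τ : Finset (Fin n)) :
    MvPolynomial (Fin n ⊕ Fin n) (ZMod 2) :=
  (∏ i ∈ σ, X (Sum.inl i)) * ∏ j ∈ τ, X (Sum.inr j)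

/-- A pseudomonomial: a product `∏_{i∈σ} x_i ∏_{j∈τ}(1 - x_j)` with `σ, τ` disjoint. -/
def IsPseudomonomial {n : ℕ} (f : MvPolynomial (Fin n) (ZMod 2)) : Prop :=
  ∃ σ τ : Finset (Fin n), Disjoint σ τ ∧ f = psm σ τ

/-- `f` is a minimal pseudomonomial of `I`: `f` is a pseudomonomial lying in `I`
and no proper divisor of `f` lies in `I`. -/
def IsMinimalPseudomonomial {n : ℕ} (I : Ideal (MvPolynomial (Fin n) (ZMod 2)))
    (f : MvPolynomial (Fin n) (ZMod 2)) : Prop :=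
  IsPseudomonomial f ∧ f ∈ I ∧
    ∀ g : MvPolynomial (Fin n) (ZMod 2), g ∣ f → ¬ f ∣ g → g ∉ I

/-! ### Auxiliary lemmas -/

/-- Ring equivalence singling out the variable `i`. -/
noncomputable def varEquiv {n : ℕ} (i : Fin n) :
    MvPolynomial (Fin n) (ZMod 2) ≃+* Polynomial (MvPolynomial {b : Fin n // b ≠ i} (ZMod 2)) :=
  ((renameEquiv (ZMod 2) (Equiv.optionSubtypeNe i)).symm.trans
    (optionEquivLeft (ZMod 2) {b : Fin n // b ≠ i})).toRingEquiv

lemma varEquiv_X {n : ℕ} (i : Fin n) : varEquiv i (X i) = Polynomial.X := by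
  have h : (renameEquiv (ZMod 2) (Equiv.optionSubtypeNe i)).symm (X i) = X none := by
    rw [AlgEquiv.symm_apply_eq, renameEquiv_apply, rename_X, Equiv.optionSubtypeNe_none]
  show (optionEquivLeft (ZMod 2) _) ((renameEquiv (ZMod 2) (Equiv.optionSubtypeNe i)).symm (X i)) = _
  rw [h, optionEquivLeft_X_none]

lemma prime_X' {n : ℕ} (i : Fin n) : Prime (X i : MvPolynomial (Fin n) (ZMod 2)) := by
  rw [← MulEquiv.prime_iff (varEquiv i).toMulEquiv]
  show Prime (varEquiv i (X i))
  rw [varEquiv_X]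
  exact Polynomial.prime_X

lemma prime_one_sub_X {n : ℕ} (i : Fin n) :
    Prime (1 - X i : MvPolynomial (Fin n) (ZMod 2)) := by
  rw [← MulEquiv.prime_iff (varEquiv i).toMulEquiv]
  show Prime (varEquiv i (1 - X i))
  rw [map_sub, map_one, varEquiv_X]
  have h : Associated (Polynomial.X - Polynomial.C (1 : MvPolynomial {b : Fin n // b ≠ i} (ZMod 2)))
      (1 - Polynomial.X) := ⟨-1, by simp [mul_neg, neg_sub]⟩
  exact h.prime (Polynomial.prime_X_sub_C 1)

lemma dvd_prod_primes {α : Type*} [CommMonoidWithZero α] [IsCancelMulZero α] [DecompositionMonoid α]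
    {ι : Type*} [DecidableEq ι] (s : Finset ι) {p : ι → α} (hp : ∀ i ∈ s, Prime (p i))
    {g : α} (hg : g ∣ ∏ i ∈ s, p i) :
    ∃ t ⊆ s, Associated g (∏ i ∈ t, p i) := by
  induction s using Finset.induction_on generalizing g with
  | empty =>
    refine ⟨∅, Finset.Subset.refl _, ?_⟩
    rw [Finset.prod_empty] at hg ⊢
    exact associated_one_iff_isUnit.2 (isUnit_of_dvd_one hg)
  | @insert a s ha ih =>
    rw [Finset.prod_insert ha] at hg
    obtain ⟨d₁, d₂, hd₁, hd₂, rfl⟩ := exists_dvd_and_dvd_of_dvd_mul hg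
    obtain ⟨t, hts, htassoc⟩ := ih (fun i hi => hp i (Finset.mem_insert_of_mem hi)) hd₂
    have hpa := hp a (Finset.mem_insert_self a s)
    obtain ⟨e, he⟩ := hd₁
    rcases hpa.irreducible.isUnit_or_isUnit he with hu | hu
    · refine ⟨t, hts.trans (Finset.subset_insert a s), ?_⟩
      exact (associated_unit_mul_left d₂ d₁ hu).trans htassoc
    · have hat : a ∉ t := fun h => ha (hts h)
      refine ⟨insert a t, Finset.insert_subset_insert a hts, ?_⟩
      rw [Finset.prod_insert hat]
      have h1 : Associated d₁ (p a) := ⟨hu.unit, by rw [IsUnit.unit_spec, he]⟩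
      exact h1.mul_mul htassoc

/-- Every divisor of a pseudomonomial is associated to a pseudomonomial on subsets. -/
lemma dvd_psm {n : ℕ} {σ τ : Finset (Fin n)} {g} (hg : g ∣ psm σ τ) :
    ∃ σ' τ', σ' ⊆ σ ∧ τ' ⊆ τ ∧ Associated g (psm σ' τ') := by
  rw [psm] at hg
  obtain ⟨g₁, g₂, h1, h2, rfl⟩ := exists_dvd_and_dvd_of_dvd_mul hg
  obtain ⟨σ', hσ', a1⟩ := dvd_prod_primes σ (fun i _ => prime_X' i) h1
  obtain ⟨τ', hτ', a2⟩ := dvd_prod_primes τ (fun j _ => prime_one_sub_X j) h2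
  exact ⟨σ', τ', hσ', hτ', a1.mul_mul a2⟩

lemma eval_psm {n : ℕ} (v : Fin n → ZMod 2) (σ τ : Finset (Fin n)) :
    eval v (psm σ τ) = (∏ i ∈ σ, v i) * ∏ j ∈ τ, (1 - v j) := by
  simp [psm]

lemma subset_of_psm_dvd {n : ℕ} {σ τ σ' τ' : Finset (Fin n)} (h' : Disjoint σ' τ')
    (hdvd : psm σ τ ∣ psm σ' τ') : σ ⊆ σ' ∧ τ ⊆ τ' := by
  classical
  obtain ⟨c, hc⟩ := hdvd
  constructor
  · intro i hi
    by_contra hiσ'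
    set v : Fin n → ZMod 2 := fun k => if k ∈ σ' then 1 else 0 with hv
    have h := congrArg (eval v) hc
    rw [map_mul, eval_psm, eval_psm] at h
    have hL1 : (∏ i ∈ σ', v i) = 1 :=
      Finset.prod_eq_one fun k hk => by simp [hv, hk]
    have hL2 : (∏ j ∈ τ', (1 - v j)) = 1 :=
      Finset.prod_eq_one fun k hk => by
        have : k ∉ σ' := fun hks => (h'.forall_ne_finset hks hk) rfl
        simp [hv, this]
    have hR : (∏ i ∈ σ, v i) = 0 :=
      Finset.prod_eq_zero hi (by simp [hv, hiσ'])
    rw [hL1, hL2, hR] at h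
    simp at h
  · intro j hj
    by_contra hjτ'
    set v : Fin n → ZMod 2 := fun k => if k ∈ σ' ∨ k = j then 1 else 0 with hv
    have h := congrArg (eval v) hc
    rw [map_mul, eval_psm, eval_psm] at h
    have hL1 : (∏ i ∈ σ', v i) = 1 :=
      Finset.prod_eq_one fun k hk => by simp [hv, Or.inl hk]
    have hL2 : (∏ j ∈ τ', (1 - v j)) = 1 :=
      Finset.prod_eq_one fun k hk => by
        have h1 : k ∉ σ' := fun hks => (h'.forall_ne_finset hks hk) rfl
        have h2 : k ≠ j := fun he => hjτ' (he ▸ hk)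
        simp [hv, h1, h2]
    have hR : (∏ j ∈ τ, (1 - v j)) = 0 :=
      Finset.prod_eq_zero hj (by simp [hv])
    rw [hL1, hL2, hR, mul_zero] at h
    simp at h

/-- Descent: a pseudomonomial in a canonical-form ideal is divisible by a generator. -/
lemma descent {n ℓ : ℕ} (σ τ : Fin ℓ → Finset (Fin n))
    (I : Ideal (MvPolynomial (Fin n) (ZMod 2)))
    (hCF : ∀ f, IsMinimalPseudomonomial I f ↔ ∃ k, f = psm (σ k) (τ k))
    (σf τf : Finset (Fin n)) (hfd : Disjoint σf τf) (hmem : psm σf τf ∈ I) :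
    ∃ k, σ k ⊆ σf ∧ τ k ⊆ τf := by
  suffices H : ∀ M (σf τf : Finset (Fin n)), σf.card + τf.card = M → Disjoint σf τf →
      psm σf τf ∈ I → ∃ k, σ k ⊆ σf ∧ τ k ⊆ τf from H _ σf τf rfl hfd hmem
  intro M
  induction M using Nat.strong_induction_on with
  | _ M ih =>
  intro σf τf hM hfd hmem
  by_cases hmin : IsMinimalPseudomonomial I (psm σf τf)
  · obtain ⟨k, hk⟩ := (hCF _).1 hmin
    have hd : psm (σ k) (τ k) ∣ psm σf τf := dvd_of_eq hk.symm
    obtain ⟨h1, h2⟩ := subset_of_psm_dvd hfd hd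
    exact ⟨k, h1, h2⟩
  · have hA : IsPseudomonomial (psm σf τf) := ⟨σf, τf, hfd, rfl⟩
    have hg : ∃ g, g ∣ psm σf τf ∧ ¬ psm σf τf ∣ g ∧ g ∈ I := by
      by_contra hno
      push_neg at hno
      exact hmin ⟨hA, hmem, fun g h1 h2 => hno g h1 h2⟩
    obtain ⟨g, hg1, hg2, hg3⟩ := hg
    obtain ⟨σ', τ', hσ', hτ', hassoc⟩ := dvd_psm hg1
    have hmemg : psm σ' τ' ∈ I := by
      obtain ⟨u, hu⟩ := hassoc
      rw [← hu]
      exact Ideal.mul_mem_right _ _ hg3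
    have hσc := Finset.card_le_card hσ'
    have hτc := Finset.card_le_card hτ'
    have hne : σ'.card + τ'.card ≠ σf.card + τf.card := by
      intro he
      have h1 : σ' = σf := Finset.eq_of_subset_of_card_le hσ' (by omega)
      have h2 : τ' = τf := Finset.eq_of_subset_of_card_le hτ' (by omega)
      rw [h1, h2] at hassoc
      exact hg2 hassoc.symm.dvd
    have hlt : σ'.card + τ'.card < M := by omega
    obtain ⟨k, h1, h2⟩ := ih _ hlt σ' τ' rfl (hfd.mono hσ' hτ') hmemg
    exact ⟨k, h1.trans hσ', h2.trans hτ'⟩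

theorem mem_iff_polarization_mem {n ℓ : ℕ}
    (σ τ : Fin ℓ → Finset (Fin n)) (hdisj : ∀ k, Disjoint (σ k) (τ k))
    (I : Ideal (MvPolynomial (Fin n) (ZMod 2)))
    (hI : I = Ideal.span (Set.range fun k => psm (σ k) (τ k)))
    (hCF : ∀ f, IsMinimalPseudomonomial I f ↔ ∃ k, f = psm (σ k) (τ k))
    (J : Ideal (MvPolynomial (Fin n ⊕ Fin n) (ZMod 2)))
    (hJ : J = Ideal.span (Set.range fun k => polz (σ k) (τ k)))
    (σf τf : Finset (Fin n)) (hf : Disjoint σf τf) :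
    psm σf τf ∈ I ↔ polz σf τf ∈ J := by
  constructor
  · intro hmem
    obtain ⟨k, h1, h2⟩ := descent σ τ I hCF σf τf hf hmem
    have hdvd : polz (σ k) (τ k) ∣ polz σf τf := by
      rw [polz, polz]
      exact mul_dvd_mul (Finset.prod_dvd_prod_of_subset _ _ _ h1)
        (Finset.prod_dvd_prod_of_subset _ _ _ h2)
    obtain ⟨c, hc⟩ := hdvd
    rw [hJ, hc]
    exact Ideal.mul_mem_right _ _ (Ideal.subset_span ⟨k, rfl⟩)
  · intro hmem
    set D : MvPolynomial (Fin n ⊕ Fin n) (ZMod 2) →+* MvPolynomial (Fin n) (ZMod 2) :=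
      (aeval (Sum.elim (fun i => X i) (fun j => 1 - X j))).toRingHom with hDdef
    have hD : ∀ σ' τ' : Finset (Fin n), D (polz σ' τ') = psm σ' τ' := by
      intro σ' τ'
      simp [hDdef, polz, psm]
    have hJI : J ≤ Ideal.comap D I := by
      rw [hJ, Ideal.span_le]
      rintro _ ⟨k, rfl⟩
      simp only [SetLike.mem_coe, Ideal.mem_comap, hD]
      rw [hI]
      exact Ideal.subset_span ⟨k, rfl⟩
    have h := hJI hmem
    rwa [Ideal.mem_comap, hD] at h
end

section
/- Let C ⊆ {0,1}^n and α ∈ {0,1,*}^n. Then the neural ideal J_C is contained in the pseudomonomial prime p_α if and only if the interval V_α is contained in C. -/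
open MvPolynomial

/-- The indicator pseudomonomial of a word `c ∈ {0,1}ⁿ`. -/
noncomputable def indic {n : ℕ} (c : Fin n → ZMod 2) :
    MvPolynomial (Fin n) (ZMod 2) :=
  ∏ i : Fin n, (if c i = 1 then X i else 1 - X i)

/-- The neural ideal of a code `C ⊆ {0,1}ⁿ`. -/
noncomputable def neuralIdeal {n : ℕ} (C : Set (Fin n → ZMod 2)) :
    Ideal (MvPolynomial (Fin n) (ZMod 2)) :=
  Ideal.span {f | ∃ c ∉ C, f = indic c}

/-- The interval associated to `α ∈ {0,1,*}ⁿ` (`none` plays the role of `*`):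
codewords agreeing with `α` at all non-`*` coordinates. -/
def intervalOf {n : ℕ} (α : Fin n → Option (ZMod 2)) : Set (Fin n → ZMod 2) :=
  {c | ∀ i a, α i = some a → c i = a}

/-- The pseudomonomial prime associated to `α ∈ {0,1,*}ⁿ`:
generated by the `x_i` with `α_i = 0` and the `1 - x_i` with `α_i = 1`. -/
noncomputable def psmPrime {n : ℕ} (α : Fin n → Option (ZMod 2)) :
    Ideal (MvPolynomial (Fin n) (ZMod 2)) :=
  Ideal.span ({f | ∃ i, α i = some 0 ∧ f = X i} ∪
    {f | ∃ i, α i = some 1 ∧ f = 1 - X i})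

lemma zmod2_cases (a : ZMod 2) : a = 0 ∨ a = 1 := by revert a; decide

theorem neuralIdeal_le_psmPrime_iff {n : ℕ} (C : Set (Fin n → ZMod 2))
    (α : Fin n → Option (ZMod 2)) :
    neuralIdeal C ≤ psmPrime α ↔ intervalOf α ⊆ C := by
  constructor
  · intro hle c hc
    by_contra hcC
    -- indic c ∈ neuralIdeal C ⊆ psmPrime α
    have hmem : indic c ∈ psmPrime α :=
      hle (Ideal.subset_span ⟨c, hcC, rfl⟩)
    -- evaluate at c : generators of psmPrime vanish
    have hker : psmPrime α ≤ RingHom.ker (eval c) := by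
      rw [psmPrime, Ideal.span_le]
      rintro f (⟨i, hαi, rfl⟩ | ⟨i, hαi, rfl⟩)
      · have : c i = 0 := hc i 0 hαi
        simp [RingHom.mem_ker, this]
      · have : c i = 1 := hc i 1 hαi
        simp [RingHom.mem_ker, this]
    have h0 : eval c (indic c) = 0 := hker hmem
    have h1 : eval c (indic c) = 1 := by
      rw [indic, map_prod]
      apply Finset.prod_eq_one
      intro i _
      by_cases h : c i = 1
      · simp [h]
      · have hc0 : c i = 0 := by
          have := zmod2_cases (c i); tauto
        simp [h, hc0]
    rw [h1] at h0
    exact one_ne_zero h0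
  · intro hsub
    rw [neuralIdeal, Ideal.span_le]
    rintro f ⟨c, hcC, rfl⟩
    have hcV : c ∉ intervalOf α := fun h => hcC (hsub h)
    simp only [intervalOf, Set.mem_setOf_eq, not_forall] at hcV
    obtain ⟨i, a, hαi, hne⟩ := hcV
    have key : indic c =
        (if c i = 1 then X i else 1 - X i) *
          ∏ j ∈ Finset.univ.erase i, (if c j = 1 then X j else 1 - X j) :=
      (Finset.mul_prod_erase Finset.univ _ (Finset.mem_univ i)).symm
    rcases zmod2_cases a with rfl | rfl
    · have hci : c i = 1 := by
        have := zmod2_cases (c i); tauto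
      rw [key, if_pos hci]
      exact Ideal.mul_mem_right _ _
        (Ideal.subset_span (Or.inl ⟨i, hαi, rfl⟩))
    · have hci : c i ≠ 1 := fun h => hne (by rw [h])
      rw [key, if_neg hci]
      exact Ideal.mul_mem_right _ _
        (Ideal.subset_span (Or.inr ⟨i, hαi, rfl⟩))
end
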